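/- Let κ₀, κ₁, κ₂ ∈ {−1, +1} with κ₁ = κ₂. Then the time resonant set of q_K is exactly {ξ = 0}: for all ξ, η ∈ ℝ⁴, q_K(ξ, η) = −κ₀|ξ| − κ₁⟨ξ+η⟩ + κ₂⟨η⟩ = 0 if and only if ξ = 0. -/

import Mathlib

/-- Japanese bracket `⟨x⟩ = √(1 + |x|²)` on `ℝ⁴`. -/
noncomputable def jb (x : EuclideanSpace ℝ (Fin 4)) : ℝ := Real.sqrt (1 + ‖x‖ ^ 2)

lemma jb_nonneg (x : EuclideanSpace ℝ (Fin 4)) : 0 ≤ jb x := Real.sqrt_nonneg _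

lemma norm_lt_jb (x : EuclideanSpace ℝ (Fin 4)) : ‖x‖ < jb x := by
  rw [jb, Real.lt_sqrt (norm_nonneg x)]; nlinarith [norm_nonneg x]

lemma jb_sq (x : EuclideanSpace ℝ (Fin 4)) : jb x ^ 2 = 1 + ‖x‖ ^ 2 :=
  Real.sq_sqrt (by positivity)

lemma jb_strict_lipschitz {a b : EuclideanSpace ℝ (Fin 4)} (h : a ≠ b) :
    |jb a - jb b| < ‖a - b‖ := by
  have hab : (0:ℝ) < ‖a - b‖ := by
    rw [norm_pos_iff]; exact sub_ne_zero_of_ne h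
  have hS : (0:ℝ) < jb a + jb b := by
    have := norm_lt_jb a; have := norm_lt_jb b
    have := norm_nonneg a; have := norm_nonneg b; linarith
  rw [← mul_lt_mul_iff_of_pos_right hS]
  have h1 : |jb a - jb b| * (jb a + jb b) = |‖a‖ - ‖b‖| * (‖a‖ + ‖b‖) := by
    have e1 : |jb a - jb b| * (jb a + jb b) = |(jb a - jb b) * (jb a + jb b)| := by
      rw [abs_mul, abs_of_nonneg hS.le]
    have e2 : |‖a‖ - ‖b‖| * (‖a‖ + ‖b‖) = |(‖a‖ - ‖b‖) * (‖a‖ + ‖b‖)| := by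
      rw [abs_mul, abs_of_nonneg (add_nonneg (norm_nonneg a) (norm_nonneg b))]
    rw [e1, e2]
    congr 1
    have := jb_sq a; have := jb_sq b
    nlinarith
  rw [h1]
  calc |‖a‖ - ‖b‖| * (‖a‖ + ‖b‖) ≤ ‖a - b‖ * (‖a‖ + ‖b‖) :=
        mul_le_mul_of_nonneg_right (abs_norm_sub_norm_le a b) (by positivity)
    _ < ‖a - b‖ * (jb a + jb b) := by
        have := norm_lt_jb a; have := norm_lt_jb b
        exact mul_lt_mul_of_pos_left (by linarith) hab

/-- If `κ₁ = κ₂`, the time resonant set of `q_K` is exactly `{ξ = 0}`: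
for all `ξ, η ∈ ℝ⁴`, `q_K(ξ, η) = −κ₀|ξ| − κ₁⟨ξ+η⟩ + κ₂⟨η⟩ = 0` iff `ξ = 0`. -/
theorem maxwell_phase_time_resonant_set (κ₀ κ₁ κ₂ : ℝ)
    (h₀ : κ₀ = -1 ∨ κ₀ = 1) (h₁ : κ₁ = -1 ∨ κ₁ = 1) (h₂ : κ₂ = -1 ∨ κ₂ = 1)
    (heq : κ₁ = κ₂)
    (ξ η : EuclideanSpace ℝ (Fin 4)) :
    (-κ₀) * ‖ξ‖ - κ₁ * jb (ξ + η) + κ₂ * jb η = 0 ↔ ξ = 0 := by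
  constructor
  · intro h
    by_contra hne
    have hξη : ξ + η ≠ η := by
      intro hc; exact hne (by simpa using congrArg (· - η) hc)
    have hlt : |jb (ξ + η) - jb η| < ‖ξ‖ := by
      have := jb_strict_lipschitz hξη
      simpa using this
    have habs : |jb (ξ + η) - jb η| = ‖ξ‖ := by
      have hk : κ₁ * (jb (ξ + η) - jb η) = -κ₀ * ‖ξ‖ := by
        rw [heq] at h ⊢; ring_nf; ring_nf at h; linarith
      have := congrArg abs hk
      rw [abs_mul, abs_mul] at this
      rcases h₀ with h0 | h0 <;> rcases h₁ with hh1 | hh1 <;>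
        simp [h0, hh1, abs_norm] at this <;> linarith [this]
    exact absurd habs (ne_of_lt hlt)
  · intro h
    subst h heq
    simp
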